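/- Let X_1,...,X_n be sampled without replacement from a finite population of N reals with mean μ, variance σ², and range [a,b], and let V_n = (1/n)∑_{i=1}^n (X_i − μ)². Then for all ε > 0, P(σ² − V_n ≥ ((b−a)²/n) ε) ≤ exp(−(b−a)²ε²/(2nσ²)); equivalently, with probability at least 1 − δ, σ² − 2σ(b−a)√(log(1/δ)/(2n)) ≤ V_n. -/

import Mathlib

open MeasureTheory Finset Real
open scoped ENNReal

/-- The first `N` coordinates of the process `X` are a sample drawn without replacement
from the population `x : Fin N → ℝ`, i.e. the law of `(X 0, …, X (N-1))` is the uniform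
distribution over the orderings of the population. -/
def samplesWithoutReplacement {Ω : Type*} [MeasurableSpace Ω] (P : Measure Ω)
    (N : ℕ) (x : Fin N → ℝ) (X : ℕ → Ω → ℝ) : Prop :=
  Measure.map (fun ω (i : Fin N) => X i ω) P =
    (Nat.factorial N : ℝ≥0∞)⁻¹ • ∑ e : Equiv.Perm (Fin N), Measure.dirac (fun i => x (e i))

section Core

variable {N : ℕ} (g : Fin N → ℝ)

/-- positions `< m` among `Fin N` -/
def Spos (N m : ℕ) : Finset (Fin N) := univ.filter (fun i => (i : ℕ) < m)

def Fperm (N : ℕ) (g : Fin N → ℝ) (m : ℕ) : ℝ :=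
  ∑ e : Equiv.Perm (Fin N), ∏ i ∈ Spos N m, g (e i)

lemma key_lemma (hg : ∀ i, 0 ≤ g i) {m : ℕ} (hm : m < N) (k : Fin N) :
    ∑ e : Equiv.Perm (Fin N), (∏ i ∈ Spos N m, g (e i)) * g (e ⟨m, hm⟩) ≤
    ∑ e : Equiv.Perm (Fin N), (∏ i ∈ Spos N m, g (e i)) * g (e k) := by
  set p : Fin N := ⟨m, hm⟩ with hp
  have hpS : p ∉ Spos N m := by simp [Spos, hp]
  by_cases hk : (k : ℕ) < m
  · -- k inside the block
    have hkS : k ∈ Spos N m := by simp [Spos, hk]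
    have hkp : k ≠ p := by
      intro h; rw [h] at hkS; exact hpS hkS
    set τ : Equiv.Perm (Fin N) := Equiv.swap p k with hτ
    set t : Equiv.Perm (Fin N) → ℝ :=
      fun e => (∏ i ∈ Spos N m, g (e i)) * (g (e k) - g (e p)) with ht
    have hre : ∑ e : Equiv.Perm (Fin N), t e
        = ∑ e : Equiv.Perm (Fin N), t (e * τ) :=
      (Fintype.sum_equiv (Equiv.mulRight τ) _ _ (fun e => by
        show t e = t (e * τ * τ)
        rw [mul_assoc, hτ, Equiv.swap_mul_self, mul_one]))
    have hpair : ∀ e : Equiv.Perm (Fin N), 0 ≤ t e + t (e * τ) := by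
      intro e
      have hQ : ∀ i ∈ (Spos N m).erase k, (e * τ) i = e i := by
        intro i hi
        have hik : i ≠ k := (Finset.mem_erase.1 hi).1
        have hiS : i ∈ Spos N m := (Finset.mem_erase.1 hi).2
        have hip : i ≠ p := by intro h; rw [h] at hiS; exact hpS hiS
        show e (τ i) = e i
        rw [hτ, Equiv.swap_apply_of_ne_of_ne hip hik]
      have h1 : ∏ i ∈ Spos N m, g (e i)
          = g (e k) * ∏ i ∈ (Spos N m).erase k, g (e i) :=
        (Finset.mul_prod_erase _ _ hkS).symm
      have h2 : ∏ i ∈ Spos N m, g ((e * τ) i)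
          = g (e p) * ∏ i ∈ (Spos N m).erase k, g (e i) := by
        rw [← Finset.mul_prod_erase _ (fun i => g ((e * τ) i)) hkS]
        have : (e * τ) k = e p := by
          show e (τ k) = e p; rw [hτ, Equiv.swap_apply_right]
        rw [this]
        congr 1
        exact Finset.prod_congr rfl (fun i hi => by rw [hQ i hi])
      have h3 : (e * τ) k = e p := by
        show e (τ k) = e p; rw [hτ, Equiv.swap_apply_right]
      have h4 : (e * τ) p = e k := by
        show e (τ p) = e k; rw [hτ, Equiv.swap_apply_left]
      have hQnn : 0 ≤ ∏ i ∈ (Spos N m).erase k, g (e i) :=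
        Finset.prod_nonneg (fun i _ => hg _)
      have : t e + t (e * τ)
          = (∏ i ∈ (Spos N m).erase k, g (e i)) * (g (e k) - g (e p)) ^ 2 := by
        rw [ht]; simp only [h1, h2, h3, h4]; ring
      rw [this]
      positivity
    have h2D : 0 ≤ (∑ e : Equiv.Perm (Fin N), t e) * 2 := by
      have : (∑ e : Equiv.Perm (Fin N), t e) * 2
          = ∑ e : Equiv.Perm (Fin N), (t e + t (e * τ)) := by
        rw [Finset.sum_add_distrib, ← hre]; ring
      rw [this]
      exact Finset.sum_nonneg (fun e _ => hpair e)
    have hD : 0 ≤ ∑ e : Equiv.Perm (Fin N), t e := by linarith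
    have : ∑ e : Equiv.Perm (Fin N), t e
        = (∑ e : Equiv.Perm (Fin N), (∏ i ∈ Spos N m, g (e i)) * g (e k))
          - ∑ e : Equiv.Perm (Fin N), (∏ i ∈ Spos N m, g (e i)) * g (e p) := by
      rw [← Finset.sum_sub_distrib]
      exact Finset.sum_congr rfl (fun e _ => by rw [ht]; ring)
    linarith [this ▸ hD]
  · -- k outside the block
    by_cases hkp : k = p
    · rw [hkp]
    · have hkS : k ∉ Spos N m := by simp [Spos, hk]
      set τ : Equiv.Perm (Fin N) := Equiv.swap p k with hτ
      apply le_of_eq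
      refine Fintype.sum_equiv (Equiv.mulRight τ) _ _ (fun e => ?_)
      show (∏ i ∈ Spos N m, g (e i)) * g (e p) = (∏ i ∈ Spos N m, g ((e * τ) i)) * g ((e * τ) k)
      have h4 : (e * τ) k = e p := by
        show e (τ k) = e p; rw [hτ, Equiv.swap_apply_right]
      have hQ : ∀ i ∈ Spos N m, (e * τ) i = e i := by
        intro i hi
        have hip : i ≠ p := by intro h; rw [h] at hi; exact hpS hi
        have hik : i ≠ k := by intro h; rw [h] at hi; exact hkS hi
        show e (τ i) = e i
        rw [hτ, Equiv.swap_apply_of_ne_of_ne hip hik]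
      rw [h4]
      congr 1
      exact (Finset.prod_congr rfl (fun i hi => by rw [hQ i hi])).symm

lemma Fperm_succ {m : ℕ} (hm : m < N) :
    Fperm N g (m + 1)
      = ∑ e : Equiv.Perm (Fin N), (∏ i ∈ Spos N m, g (e i)) * g (e ⟨m, hm⟩) := by
  have hins : Spos N (m+1) = insert ⟨m, hm⟩ (Spos N m) := by
    ext i
    simp only [Spos, Finset.mem_filter, Finset.mem_univ, true_and, Finset.mem_insert]
    constructor
    · intro h
      rcases Nat.lt_succ_iff_lt_or_eq.1 h with h | h
      · exact Or.inr h
      · exact Or.inl (Fin.ext h)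
    · rintro (h | h)
      · rw [h]; exact Nat.lt_succ_self m
      · exact Nat.lt_succ_of_lt h
  have hpS : (⟨m, hm⟩ : Fin N) ∉ Spos N m := by simp [Spos]
  unfold Fperm
  refine Finset.sum_congr rfl (fun e _ => ?_)
  rw [hins, Finset.prod_insert hpS]; ring

lemma step_lemma (hg : ∀ i, 0 ≤ g i) {m : ℕ} (hm : m < N) :
    (N : ℝ) * Fperm N g (m + 1) ≤ (∑ j, g j) * Fperm N g m := by
  have hstep : ∀ k : Fin N,
      Fperm N g (m+1) ≤ ∑ e : Equiv.Perm (Fin N), (∏ i ∈ Spos N m, g (e i)) * g (e k) := by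
    intro k
    rw [Fperm_succ g hm]
    exact key_lemma g hg hm k
  have h1 : (N : ℝ) * Fperm N g (m + 1) = ∑ _k : Fin N, Fperm N g (m+1) := by
    rw [Finset.sum_const, Finset.card_univ, Fintype.card_fin, nsmul_eq_mul]
  rw [h1]
  calc ∑ _k : Fin N, Fperm N g (m+1)
      ≤ ∑ k : Fin N, ∑ e : Equiv.Perm (Fin N), (∏ i ∈ Spos N m, g (e i)) * g (e k) :=
        Finset.sum_le_sum (fun k _ => hstep k)
    _ = ∑ e : Equiv.Perm (Fin N), (∏ i ∈ Spos N m, g (e i)) * (∑ k : Fin N, g (e k)) := by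
        rw [Finset.sum_comm]
        exact Finset.sum_congr rfl (fun e _ => by rw [Finset.mul_sum])
    _ = (∑ j, g j) * Fperm N g m := by
        rw [Fperm, Finset.mul_sum]
        refine Finset.sum_congr rfl (fun e _ => ?_)
        rw [Equiv.sum_comp e g]; ring

lemma core_bound (hg : ∀ i, 0 ≤ g i) : ∀ m : ℕ, m ≤ N →
    (N : ℝ) ^ m * Fperm N g m ≤ (∑ j, g j) ^ m * (Nat.factorial N : ℝ) := by
  have hF0 : Fperm N g 0 = (Nat.factorial N : ℝ) := by
    unfold Fperm
    have : Spos N 0 = ∅ := by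
      ext i; simp [Spos]
    simp [this, Finset.card_univ, Fintype.card_perm]
  have hG : 0 ≤ ∑ j, g j := Finset.sum_nonneg fun j _ => hg j
  intro m
  induction m with
  | zero => intro _; simp [hF0]
  | succ m ih =>
    intro hm1
    have hm : m < N := hm1
    calc (N:ℝ) ^ (m+1) * Fperm N g (m+1)
        = (N:ℝ)^m * ((N:ℝ) * Fperm N g (m+1)) := by ring
      _ ≤ (N:ℝ)^m * ((∑ j, g j) * Fperm N g m) :=
          mul_le_mul_of_nonneg_left (step_lemma g hg hm) (by positivity)
      _ = (∑ j, g j) * ((N:ℝ)^m * Fperm N g m) := by ring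
      _ ≤ (∑ j, g j) * ((∑ j, g j) ^ m * (Nat.factorial N : ℝ)) :=
          mul_le_mul_of_nonneg_left (ih (le_of_lt hm)) hG
      _ = (∑ j, g j) ^ (m+1) * (Nat.factorial N : ℝ) := by ring

end Core

lemma exp_neg_le_quad {x : ℝ} (hx : 0 ≤ x) : Real.exp (-x) ≤ 1 - x + x ^ 2 / 2 := by
  have key : ∀ y : ℝ, HasDerivAt (fun z => 1 - z + z ^ 2 / 2 - Real.exp (-z))
      (-1 + y + Real.exp (-y)) y := by
    intro y
    have h1 : HasDerivAt (fun z : ℝ => 1 - z + z ^ 2 / 2) (-1 + y) y := by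
      have := ((hasDerivAt_id y).const_sub 1).add
        (((hasDerivAt_pow 2 y).div_const 2))
      exact this.congr_deriv (by simp)
    have h2 : HasDerivAt (fun z : ℝ => Real.exp (-z)) (-Real.exp (-y)) y := by
      have := (Real.hasDerivAt_exp (-y)).comp y ((hasDerivAt_id y).neg)
      exact this.congr_deriv (by ring)
    exact (h1.sub h2).congr_deriv (by ring)
  have hmono : MonotoneOn (fun z => 1 - z + z ^ 2 / 2 - Real.exp (-z)) (Set.Ici 0) := by
    apply monotoneOn_of_deriv_nonneg (convex_Ici 0)
    · exact Continuous.continuousOn (by continuity)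
    · intro y _
      exact (key y).differentiableAt.differentiableWithinAt
    · intro y hy
      rw [(key y).deriv]
      have := Real.add_one_le_exp (-y)
      linarith
  have h0 : (fun z => 1 - z + z ^ 2 / 2 - Real.exp (-z)) 0 = 0 := by simp
  have := hmono (Set.self_mem_Ici) (Set.mem_Ici.2 hx) hx
  rw [h0] at this
  linarith [this]

section MGF

variable {Ω : Type*} [MeasurableSpace Ω] (P : Measure Ω)

/-- MGF bound for the lower tail, via the permutation Maclaurin inequality. -/
lemma mgf_bound (N n : ℕ) (hN0 : 0 < N) (hn : n ≤ N) (x : Fin N → ℝ)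
    (X : ℕ → Ω → ℝ) (hXm : ∀ i, Measurable (X i))
    (hX : samplesWithoutReplacement P N x X) (μ σ2 lam : ℝ) :
    ∫⁻ ω, ENNReal.ofReal (Real.exp (lam * ((n:ℝ)*σ2 - ∑ i ∈ Finset.range n, (X i ω - μ)^2))) ∂P
      ≤ ENNReal.ofReal (Real.exp (lam*(n:ℝ)*σ2)
          * ((∑ j, Real.exp (-lam * (x j - μ)^2)) / N)^n) := by
  classical
  have hNR : (0:ℝ) < N := by exact_mod_cast hN0
  have hX' : Measure.map (fun ω (i : Fin N) => X i ω) P =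
      (Nat.factorial N : ℝ≥0∞)⁻¹ •
        ∑ e : Equiv.Perm (Fin N), Measure.dirac (fun i => x (e i)) := hX
  have hYm : Measurable (fun ω (i : Fin N) => X i ω) :=
    measurable_pi_lambda _ (fun i => hXm i)
  set w : (Fin N → ℝ) → ℝ := fun y => ∑ i : Fin n, (y (Fin.castLE hn i) - μ)^2 with hw
  set h : (Fin N → ℝ) → ℝ≥0∞ :=
    fun y => ENNReal.ofReal (Real.exp (lam * ((n:ℝ)*σ2 - w y))) with hh
  have hwm : Measurable w :=
    Finset.measurable_sum _ fun i _ =>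
      ((measurable_pi_apply _).sub measurable_const).pow_const 2
  have hhm : Measurable h :=
    Measurable.ennreal_ofReal
      (Real.measurable_exp.comp ((measurable_const.sub hwm).const_mul lam))
  have hcomp : ∀ ω : Ω,
      ENNReal.ofReal (Real.exp (lam * ((n:ℝ)*σ2 - ∑ i ∈ Finset.range n, (X i ω - μ)^2)))
        = h ((fun ω (i : Fin N) => X i ω) ω) := by
    intro ω
    have hsum : ∑ i ∈ Finset.range n, (X i ω - μ)^2 = w ((fun ω (i : Fin N) => X i ω) ω) := by
      rw [hw]
      rw [← Fin.sum_univ_eq_sum_range (fun i => (X i ω - μ)^2) n]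
      exact Finset.sum_congr rfl fun i _ => by simp [Fin.coe_castLE]
    rw [hh, hsum]
  set g : Fin N → ℝ := fun j => Real.exp (-lam * (x j - μ)^2) with hg
  have hgnn : ∀ j, 0 ≤ g j := fun j => (Real.exp_pos _).le
  have hSpos : Spos N n = Finset.map (Fin.castLEEmb hn) Finset.univ := by
    ext j
    simp only [Spos, Finset.mem_filter, Finset.mem_univ, true_and, Finset.mem_map]
    constructor
    · intro hj
      first
      | exact ⟨⟨(j : ℕ), hj⟩, Fin.ext (by simp)⟩
      | exact ⟨⟨(j : ℕ), hj⟩, Finset.mem_univ _, Fin.ext (by simp)⟩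
    · rintro ⟨i, hi⟩
      first
      | (rw [← hi.2]; simpa using i.isLt)
      | (rw [← hi]; simpa using i.isLt)
  have hpoint : ∀ e : Equiv.Perm (Fin N),
      h (fun i => x (e i)) =
        ENNReal.ofReal (Real.exp (lam*(n:ℝ)*σ2) * ∏ i ∈ Spos N n, g (e i)) := by
    intro e
    have hws : w (fun i => x (e i)) = ∑ i ∈ Spos N n, (x (e i) - μ)^2 := by
      rw [hw, hSpos, Finset.sum_map]
      rfl
    have heq : lam * ((n:ℝ)*σ2 - ∑ i ∈ Spos N n, (x (e i) - μ)^2)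
        = lam*(n:ℝ)*σ2 + ∑ i ∈ Spos N n, (-lam * (x (e i) - μ)^2) := by
      rw [← Finset.mul_sum]
      ring
    show ENNReal.ofReal (Real.exp (lam * ((n:ℝ)*σ2 - w (fun i => x (e i))))) = _
    rw [hws, heq, Real.exp_add, Real.exp_sum]
  calc ∫⁻ ω, ENNReal.ofReal
        (Real.exp (lam * ((n:ℝ)*σ2 - ∑ i ∈ Finset.range n, (X i ω - μ)^2))) ∂P
      = ∫⁻ ω, h ((fun ω (i : Fin N) => X i ω) ω) ∂P := lintegral_congr hcomp
    _ = ∫⁻ y, h y ∂(Measure.map (fun ω (i : Fin N) => X i ω) P) :=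
        (lintegral_map hhm hYm).symm
    _ = (Nat.factorial N : ℝ≥0∞)⁻¹ *
          ∑ e : Equiv.Perm (Fin N), h (fun i => x (e i)) := by
        rw [hX', lintegral_smul_measure, lintegral_finset_sum_measure]
        congr 1
        exact Finset.sum_congr rfl fun e _ => lintegral_dirac' _ hhm
    _ = (Nat.factorial N : ℝ≥0∞)⁻¹ *
          ENNReal.ofReal (Real.exp (lam*(n:ℝ)*σ2) * Fperm N g n) := by
        congr 1
        rw [Finset.sum_congr rfl fun e _ => hpoint e,
          ← ENNReal.ofReal_sum_of_nonneg (fun e _ => by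
            have := Finset.prod_nonneg (fun i _ => hgnn (e i)) (s := Spos N n)
            positivity)]
        congr 1
        rw [Fperm, Finset.mul_sum]
    _ ≤ (Nat.factorial N : ℝ≥0∞)⁻¹ *
          ENNReal.ofReal (Real.exp (lam*(n:ℝ)*σ2) *
            (((∑ j, g j) / N)^n * (Nat.factorial N : ℝ))) := by
        apply mul_le_mul_right
        apply ENNReal.ofReal_le_ofReal
        apply mul_le_mul_of_nonneg_left _ (Real.exp_pos _).le
        have hcb := core_bound g hgnn n hn
        rw [div_pow, div_mul_eq_mul_div, le_div_iff₀ (pow_pos hNR n)]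
        calc Fperm N g n * (N:ℝ)^n = (N:ℝ)^n * Fperm N g n := by ring
          _ ≤ (∑ j, g j)^n * (Nat.factorial N : ℝ) := hcb
    _ = ENNReal.ofReal (Real.exp (lam*(n:ℝ)*σ2) * ((∑ j, g j) / N)^n) := by
        have hr : Real.exp (lam*(n:ℝ)*σ2) * (((∑ j, g j) / N)^n * (Nat.factorial N : ℝ))
            = (Real.exp (lam*(n:ℝ)*σ2) * ((∑ j, g j) / N)^n) * (Nat.factorial N : ℝ) := by
          ring
        rw [hr, ENNReal.ofReal_mul (by
          have hGnn : (0:ℝ) ≤ ∑ j, g j := Finset.sum_nonneg fun j _ => hgnn j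
          positivity)]
        rw [ENNReal.ofReal_natCast]
        rw [← mul_assoc, mul_comm ((Nat.factorial N : ℝ≥0∞))⁻¹, mul_assoc,
          mul_comm ((Nat.factorial N : ℝ≥0∞))⁻¹, ENNReal.mul_inv_cancel
            (by exact_mod_cast Nat.factorial_ne_zero N) (ENNReal.natCast_ne_top _), mul_one]

end MGF

lemma aux_Teps {n T ba : ℝ} (hn : n ≠ 0) (hba : ba ≠ 0) : ba^2/n*(n*T/ba^2) = T := by
  field_simp

lemma aux_exp {n T L σ2 ba : ℝ} (hn : n ≠ 0) (hba : ba ≠ 0) (hσ : σ2 ≠ 0)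
    (hT2 : T^2 = 4*σ2*ba^2*(L/(2*n))) :
    -(ba^2*(n*T/ba^2)^2)/(2*n*σ2) = -L := by
  rw [div_pow, mul_pow, hT2]
  field_simp
  ring

set_option maxHeartbeats 1000000 in
/-- Lower-deviation bound for the empirical second moment
`V_n = (1/n) ∑_{i=1}^n (X_i - μ)²` under sampling without replacement. -/
theorem empirical_second_moment_lower_deviation
    {Ω : Type*} [MeasurableSpace Ω] (P : Measure Ω) [IsProbabilityMeasure P]
    (N n : ℕ) (hN : 2 ≤ N) (hn1 : 1 ≤ n) (hn : n ≤ N) (x : Fin N → ℝ)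
    (X : ℕ → Ω → ℝ) (hXm : ∀ i, Measurable (X i))
    (hX : samplesWithoutReplacement P N x X)
    (a b : ℝ) (ha : IsLeast (Set.range x) a) (hb : IsGreatest (Set.range x) b)
    (μ : ℝ) (hμ : μ = (∑ i, x i) / N)
    (σ2 : ℝ) (hσ2 : σ2 = (∑ i, (x i - μ) ^ 2) / N)
    (V : Ω → ℝ) (hV : ∀ ω, V ω = (∑ i ∈ Finset.range n, (X i ω - μ) ^ 2) / (n : ℝ)) :
    (∀ ε : ℝ, 0 < ε →
      P {ω | σ2 - V ω ≥ (b - a) ^ 2 / (n : ℝ) * ε} ≤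
        ENNReal.ofReal (Real.exp (-((b - a) ^ 2 * ε ^ 2) / (2 * n * σ2)))) ∧
    (∀ δ : ℝ, 0 < δ → δ ≤ 1 →
      ENNReal.ofReal (1 - δ) ≤
        P {ω | σ2 - 2 * Real.sqrt σ2 * (b - a) *
            Real.sqrt (Real.log (1 / δ) / (2 * n)) ≤ V ω}) := by
  have hN0 : 0 < N := by omega
  have hNR : (0:ℝ) < N := by exact_mod_cast hN0
  have hnR : (0:ℝ) < n := by exact_mod_cast hn1
  have hnne : (n:ℝ) ≠ 0 := ne_of_gt hnR
  have hab : a ≤ b := hb.2 ha.1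
  have hax : ∀ j, a ≤ x j := fun j => ha.2 ⟨j, rfl⟩
  have hxb : ∀ j, x j ≤ b := fun j => hb.2 ⟨j, rfl⟩
  have haμ : a ≤ μ := by
    rw [hμ, le_div_iff₀ hNR]
    calc a * N = ∑ _j : Fin N, a := by
          rw [Finset.sum_const, Finset.card_univ, Fintype.card_fin, nsmul_eq_mul]; ring
      _ ≤ ∑ j, x j := Finset.sum_le_sum fun j _ => hax j
  have hμb : μ ≤ b := by
    rw [hμ, div_le_iff₀ hNR]
    calc ∑ j, x j ≤ ∑ _j : Fin N, b := Finset.sum_le_sum fun j _ => hxb j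
      _ = b * N := by
          rw [Finset.sum_const, Finset.card_univ, Fintype.card_fin, nsmul_eq_mul]; ring
  have hz_le : ∀ j, (x j - μ)^2 ≤ (b-a)^2 := by
    intro j
    have h1 := hax j
    have h2 := hxb j
    nlinarith
  have hzsum : ∑ j, (x j - μ)^2 = N * σ2 := by
    rw [hσ2]; field_simp
  have hσ2nn : 0 ≤ σ2 := by
    rw [hσ2]
    apply div_nonneg _ (le_of_lt hNR)
    exact Finset.sum_nonneg fun j _ => sq_nonneg _
  have hVm : Measurable V := by
    have hVeq : V = fun ω => (∑ i ∈ Finset.range n, (X i ω - μ)^2) / (n:ℝ) := funext hV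
    rw [hVeq]
    exact (Finset.measurable_sum _ fun i _ =>
      ((hXm i).sub measurable_const).pow_const 2).div_const _
  have hVnn : ∀ ω, 0 ≤ V ω := by
    intro ω; rw [hV]
    apply div_nonneg _ (le_of_lt hnR)
    exact Finset.sum_nonneg fun i _ => sq_nonneg _
  have part1 : ∀ ε : ℝ, 0 < ε →
      P {ω | σ2 - V ω ≥ (b - a) ^ 2 / (n : ℝ) * ε} ≤
        ENNReal.ofReal (Real.exp (-((b - a) ^ 2 * ε ^ 2) / (2 * n * σ2))) := by
    intro ε hε
    rcases eq_or_lt_of_le hσ2nn with hσ0 | hσpos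
    · rw [← hσ0]
      simp only [mul_zero, div_zero, Real.exp_zero, ENNReal.ofReal_one]
      exact prob_le_one
    · set lam : ℝ := ε / (n * σ2) with hlam
      have hlamnn : 0 ≤ lam := le_of_lt (by positivity)
      set f : Ω → ℝ≥0∞ := fun ω =>
        ENNReal.ofReal (Real.exp (lam * ((n:ℝ)*σ2 - ∑ i ∈ Finset.range n, (X i ω - μ)^2)))
        with hf
      have hfm : Measurable f := by
        apply Measurable.ennreal_ofReal
        apply Real.measurable_exp.comp
        apply Measurable.const_mul
        apply Measurable.const_sub
        exact Finset.measurable_sum _ fun i _ => ((hXm i).sub measurable_const).pow_const 2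
      set c : ℝ≥0∞ := ENNReal.ofReal (Real.exp (lam * ((b-a)^2 * ε))) with hc
      have hc0 : c ≠ 0 := by
        rw [hc]
        simp [Real.exp_pos]
      have hctop : c ≠ ⊤ := ENNReal.ofReal_ne_top
      have hincl : {ω | σ2 - V ω ≥ (b - a) ^ 2 / (n : ℝ) * ε} ⊆ {ω | c ≤ f ω} := by
        intro ω hω
        simp only [Set.mem_setOf_eq] at hω ⊢
        rw [hc, hf]
        apply ENNReal.ofReal_le_ofReal
        apply Real.exp_le_exp.2
        apply mul_le_mul_of_nonneg_left _ hlamnn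
        have hmul : (n:ℝ) * ((b-a)^2 / n * ε) ≤ (n:ℝ) * (σ2 - V ω) :=
          mul_le_mul_of_nonneg_left hω (le_of_lt hnR)
        have hW : (n:ℝ) * V ω = ∑ i ∈ Finset.range n, (X i ω - μ)^2 := by
          rw [hV]; field_simp
        calc (b-a)^2 * ε = (n:ℝ) * ((b-a)^2 / n * ε) := by field_simp
          _ ≤ (n:ℝ) * (σ2 - V ω) := hmul
          _ = (n:ℝ)*σ2 - ∑ i ∈ Finset.range n, (X i ω - μ)^2 := by rw [mul_sub, hW]
      have hmarkov : c * P {ω | c ≤ f ω} ≤ ∫⁻ ω, f ω ∂P :=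
        mul_meas_ge_le_lintegral₀ hfm.aemeasurable c
      have hmgf := mgf_bound P N n hN0 hn x X hXm hX μ σ2 lam
      set y : ℝ := -lam*σ2 + lam^2*(b-a)^2*σ2/2 with hy
      have hGle : (∑ j, Real.exp (-lam * (x j - μ)^2)) ≤ N * Real.exp y := by
        have hsummand : ∀ j : Fin N, Real.exp (-lam * (x j - μ)^2)
            ≤ 1 - lam * (x j - μ)^2 + lam^2*(b-a)^2/2 * (x j - μ)^2 := by
          intro j
          have hnn : 0 ≤ lam * (x j - μ)^2 := by positivity
          have h1 := exp_neg_le_quad hnn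
          have h1' : Real.exp (-lam * (x j - μ)^2)
              ≤ 1 - lam * (x j - μ)^2 + (lam * (x j - μ)^2)^2/2 := by
            rw [neg_mul] at *
            exact h1
          have h2 : (lam * (x j - μ)^2)^2 ≤ lam^2 * (b-a)^2 * (x j - μ)^2 := by
            have h3 := mul_le_mul_of_nonneg_left
              (mul_le_mul_of_nonneg_right (hz_le j) (sq_nonneg (x j - μ)))
              (sq_nonneg lam)
            nlinarith [h3]
          linarith
        have e1 : ∑ _j : Fin N, (1:ℝ) = N := by simp
        have e2 : ∑ j, lam * (x j-μ)^2 = lam * (N*σ2) := by rw [← Finset.mul_sum, hzsum]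
        have e3 : ∑ j, lam^2*(b-a)^2/2 * (x j-μ)^2 = lam^2*(b-a)^2/2 * (N*σ2) := by
          rw [← Finset.mul_sum, hzsum]
        calc (∑ j, Real.exp (-lam * (x j - μ)^2))
            ≤ ∑ j, (1 - lam * (x j - μ)^2 + lam^2*(b-a)^2/2 * (x j - μ)^2) :=
              Finset.sum_le_sum fun j _ => hsummand j
          _ = (∑ _j : Fin N, (1:ℝ)) - (∑ j, lam * (x j-μ)^2)
                + ∑ j, lam^2*(b-a)^2/2 * (x j-μ)^2 := by
              rw [Finset.sum_add_distrib, Finset.sum_sub_distrib]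
          _ = N * (1 + y) := by rw [e1, e2, e3, hy]; ring
          _ ≤ N * Real.exp y := by
              apply mul_le_mul_of_nonneg_left _ (le_of_lt hNR)
              have := Real.add_one_le_exp y
              linarith
      have hpow : ((∑ j, Real.exp (-lam * (x j - μ)^2)) / N)^n ≤ Real.exp ((n:ℝ) * y) := by
        have hGnn : (0:ℝ) ≤ ∑ j, Real.exp (-lam * (x j - μ)^2) :=
          Finset.sum_nonneg fun j _ => (Real.exp_pos _).le
        have hdiv : (∑ j, Real.exp (-lam * (x j - μ)^2)) / N ≤ Real.exp y := by
          rw [div_le_iff₀ hNR]; linarith [hGle]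
        calc ((∑ j, Real.exp (-lam * (x j - μ)^2)) / N)^n ≤ (Real.exp y)^n :=
              pow_le_pow_left₀ (div_nonneg hGnn hNR.le) hdiv n
          _ = Real.exp ((n:ℝ) * y) := (Real.exp_nat_mul y n).symm
      have hI : ∫⁻ ω, f ω ∂P ≤ ENNReal.ofReal (Real.exp (lam*(n:ℝ)*σ2 + (n:ℝ)*y)) := by
        refine le_trans hmgf ?_
        apply ENNReal.ofReal_le_ofReal
        rw [Real.exp_add]
        exact mul_le_mul_of_nonneg_left hpow (Real.exp_pos _).le
      have hPle : P {ω | σ2 - V ω ≥ (b - a) ^ 2 / (n : ℝ) * ε}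
          ≤ ENNReal.ofReal (Real.exp (lam*(n:ℝ)*σ2 + (n:ℝ)*y)) / c := by
        rw [ENNReal.le_div_iff_mul_le (Or.inl hc0) (Or.inl hctop)]
        calc P {ω | σ2 - V ω ≥ (b - a) ^ 2 / (n : ℝ) * ε} * c
            = c * P {ω | σ2 - V ω ≥ (b - a) ^ 2 / (n : ℝ) * ε} := mul_comm _ _
          _ ≤ c * P {ω | c ≤ f ω} := mul_le_mul_right (measure_mono hincl) c
          _ ≤ ∫⁻ ω, f ω ∂P := hmarkov
          _ ≤ _ := hI
      refine le_trans hPle ?_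
      rw [hc, ← ENNReal.ofReal_div_of_pos (Real.exp_pos _), ← Real.exp_sub]
      apply ENNReal.ofReal_le_ofReal
      apply Real.exp_le_exp.2
      apply le_of_eq
      rw [hy, hlam]
      have hσ2ne : σ2 ≠ 0 := ne_of_gt hσpos
      field_simp
      ring
  refine ⟨part1, ?_⟩
  intro δ hδ0 hδ1
  rcases eq_or_lt_of_le hδ1 with hδe | hδlt
  · rw [hδe]
    simp
  · set L : ℝ := Real.log (1/δ) with hL
    have hLpos : 0 < L := Real.log_pos (by rw [lt_div_iff₀ hδ0]; linarith)
    rcases eq_or_lt_of_le hσ2nn with hσ0 | hσpos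
    · have hset : {ω | σ2 - 2 * Real.sqrt σ2 * (b - a) *
            Real.sqrt (L / (2 * n)) ≤ V ω} = Set.univ := by
        ext ω
        simp only [Set.mem_setOf_eq, Set.mem_univ, iff_true]
        rw [← hσ0, Real.sqrt_zero]
        have := hVnn ω
        linarith
      rw [hset, measure_univ]
      exact ENNReal.ofReal_le_one.2 (by linarith)
    · have hba : 0 < b - a := by
        rcases lt_or_ge a b with hlt | hge
        · linarith
        · exfalso
          have hae : a = b := le_antisymm hab hge
          have hxeq : ∀ j, x j = μ := by
            intro j
            have h1 := hax j; have h2 := hxb j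
            have h3 : x j = a := by rw [hae] at *; linarith
            have h4 : μ = a := by rw [hae] at *; linarith [haμ, hμb]
            rw [h3, h4]
          have : σ2 = 0 := by
            rw [hσ2]
            have hz : ∀ j : Fin N, (x j - μ)^2 = 0 := fun j => by rw [hxeq j]; ring
            rw [Finset.sum_congr rfl fun j _ => hz j]
            simp
          linarith
      set T : ℝ := 2 * Real.sqrt σ2 * (b - a) * Real.sqrt (L / (2 * n)) with hT
      have hsq1 : Real.sqrt σ2 ^ 2 = σ2 := Real.sq_sqrt (le_of_lt hσpos)
      have hsq2 : Real.sqrt (L / (2 * n)) ^ 2 = L / (2*n) :=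
        Real.sq_sqrt (by positivity)
      have hTpos : 0 < T := by
        rw [hT]
        have h1 : 0 < Real.sqrt σ2 := Real.sqrt_pos.2 hσpos
        have h2 : 0 < Real.sqrt (L / (2 * n)) := Real.sqrt_pos.2 (by positivity)
        positivity
      set ε : ℝ := n * T / (b - a)^2 with hε
      have hεpos : 0 < ε := by positivity
      have hPbad := part1 ε hεpos
      have hbane : (b-a) ≠ 0 := ne_of_gt hba
      have hσ2ne : σ2 ≠ 0 := ne_of_gt hσpos
      have hTε : (b - a) ^ 2 / (n : ℝ) * ε = T := by
        rw [hε]; exact aux_Teps hnne hbane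
      have hexp : -((b - a) ^ 2 * ε ^ 2) / (2 * n * σ2) = -L := by
        have hT2 : T^2 = 4 * σ2 * (b-a)^2 * (L / (2*n)) := by
          rw [hT, mul_pow, mul_pow, mul_pow, hsq1, hsq2]; ring
        rw [hε]
        exact aux_exp hnne hbane hσ2ne hT2
      rw [hTε, hexp] at hPbad
      have hexpL : Real.exp (-L) = δ := by
        rw [hL, Real.exp_neg, Real.exp_log (by positivity : (0:ℝ) < 1/δ), one_div, inv_inv]
      rw [hexpL] at hPbad
      have hBm : MeasurableSet {ω | σ2 - V ω ≥ T} :=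
        measurableSet_le measurable_const (measurable_const.sub hVm)
      have hsub : {ω | σ2 - V ω ≥ T}ᶜ ⊆ {ω | σ2 - T ≤ V ω} := by
        intro ω hω
        simp only [Set.mem_compl_iff, Set.mem_setOf_eq, not_le] at hω ⊢
        linarith
      have hgoal : {ω | σ2 - 2 * Real.sqrt σ2 * (b - a) *
            Real.sqrt (L / (2 * n)) ≤ V ω} = {ω | σ2 - T ≤ V ω} := by
        rw [hT]
      rw [hgoal]
      calc ENNReal.ofReal (1 - δ) = 1 - ENNReal.ofReal δ := by
            rw [ENNReal.ofReal_sub 1 (le_of_lt hδ0), ENNReal.ofReal_one]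
        _ ≤ 1 - P {ω | σ2 - V ω ≥ T} := tsub_le_tsub_left hPbad 1
        _ = P {ω | σ2 - V ω ≥ T}ᶜ := (prob_compl_eq_one_sub hBm).symm
        _ ≤ P {ω | σ2 - T ≤ V ω} := measure_mono hsub
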